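/- Theorem (error analysis of the global first-order approximation). Fix dimensions d ≥ 1 and block size B ≥ 1, a finite set 𝒰 of unselected block indices, and a query q ∈ ℝ^d with ‖q‖₂ ≤ C_q for some constant C_q > 0. For each j ∈ 𝒰 let k_{j,1}, …, k_{j,B} ∈ ℝ^d be keys with centroid k̄_j = (1/B)·∑_{n=1}^B k_{j,n}, set α_j = exp(⟨q, k̄_j⟩/√d), let H_j be a real d×d matrix for each j ∈ 𝒰, let H̄ be a real d×d matrix, and set M = max_{j∈𝒰} ‖H_j − H̄‖₂ (operator norm). Let D > 0 be a real number (the attention denominator), set the tail mass τ = ∑_{j∈𝒰} ∑_{n=1}^B exp(⟨q, k_{j,n}⟩/√d), and assume τ ≤ D; set the tail fraction ρ = τ/D. Let N ∈ ℝ^d, define the exact output o = N/D and the approximate output õ = (N + ((∑_{j∈𝒰} α_j)·H̄ − ∑_{j∈𝒰} α_j·H_j)ᵀ q)/D. Then ‖õ − o‖₂ ≤ C_q · M · ρ / B. -/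

import Mathlib

open Matrix
open scoped RealInnerProductSpace Matrix.Norms.L2Operator

/-- Error analysis of the global first-order approximation (Theorem 1):
replacing `∑ j ∈ U, α j • H j` by `(∑ j ∈ U, α j) • H̄` in the numerator, while keeping
the same denominator `D`, incurs an output error of at most `C_q * M * ρ / B`,
where `ρ = τ / D` is the tail fraction. -/
theorem global_first_order_error {ι : Type*} (d B : ℕ) (hd : 1 ≤ d) (hB : 1 ≤ B)
    (U : Finset ι) (hU : U.Nonempty)
    (q : EuclideanSpace ℝ (Fin d)) (Cq : ℝ) (hCq : 0 < Cq) (hq : ‖q‖ ≤ Cq)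
    (k : ι → Fin B → EuclideanSpace ℝ (Fin d))
    (α : ι → ℝ)
    (hα : ∀ j ∈ U, α j = Real.exp (⟪q, (B : ℝ)⁻¹ • (∑ n, k j n)⟫ / Real.sqrt d))
    (H : ι → Matrix (Fin d) (Fin d) ℝ) (Hbar : Matrix (Fin d) (Fin d) ℝ)
    (M : ℝ) (hM : M = U.sup' hU fun j => ‖H j - Hbar‖)
    (D : ℝ) (hD : 0 < D)
    (τ : ℝ) (hτ : τ = ∑ j ∈ U, ∑ n, Real.exp (⟪q, k j n⟫ / Real.sqrt d))
    (hτD : τ ≤ D)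
    (N : EuclideanSpace ℝ (Fin d)) :
    ‖D⁻¹ • (N + Matrix.toEuclideanLin (((∑ j ∈ U, α j) • Hbar - ∑ j ∈ U, α j • H j)ᵀ) q)
        - D⁻¹ • N‖ ≤ Cq * M * (τ / D) / B := by
  have hB0 : (0:ℝ) < (B:ℝ) := by exact_mod_cast hB
  set A : Matrix (Fin d) (Fin d) ℝ := (∑ j ∈ U, α j) • Hbar - ∑ j ∈ U, α j • H j with hA
  -- nonnegativity facts
  have hαpos : ∀ j ∈ U, 0 < α j := fun j hj => (hα j hj) ▸ Real.exp_pos _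
  have hM0 : 0 ≤ M := by
    obtain ⟨j, hj⟩ := hU
    calc (0:ℝ) ≤ ‖H j - Hbar‖ := norm_nonneg _
    _ ≤ M := hM ▸ Finset.le_sup' (fun j => ‖H j - Hbar‖) hj
  -- Jensen: α j ≤ B⁻¹ * ∑ n, exp(⟪q, k j n⟫ / √d)
  have hJensen : ∀ j ∈ U, α j ≤ (B:ℝ)⁻¹ * ∑ n, Real.exp (⟪q, k j n⟫ / Real.sqrt d) := by
    intro j hj
    have h1 : ⟪q, (B : ℝ)⁻¹ • (∑ n, k j n)⟫ / Real.sqrt d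
        = ∑ n, (B:ℝ)⁻¹ • (⟪q, k j n⟫ / Real.sqrt d) := by
      rw [real_inner_smul_right, inner_sum]
      rw [Finset.mul_sum, Finset.sum_div]
      simp [smul_eq_mul, mul_div_assoc]
    have hw : ∑ _n : Fin B, (B:ℝ)⁻¹ = 1 := by
      simp [Finset.sum_const, Finset.card_univ]
      field_simp
    have := convexOn_exp.map_sum_le (t := Finset.univ)
      (w := fun _ : Fin B => (B:ℝ)⁻¹)
      (p := fun n => ⟪q, k j n⟫ / Real.sqrt d)
      (fun _ _ => by positivity) hw (fun _ _ => Set.mem_univ _)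
    rw [hα j hj, h1]
    calc Real.exp (∑ n, (B:ℝ)⁻¹ • (⟪q, k j n⟫ / Real.sqrt d))
        ≤ ∑ n, (B:ℝ)⁻¹ • Real.exp (⟪q, k j n⟫ / Real.sqrt d) := this
      _ = (B:ℝ)⁻¹ * ∑ n, Real.exp (⟪q, k j n⟫ / Real.sqrt d) := by
          rw [Finset.mul_sum]; simp [smul_eq_mul]
  have hsumα : ∑ j ∈ U, α j ≤ τ / (B:ℝ) := by
    rw [hτ, div_eq_inv_mul, Finset.mul_sum]
    exact Finset.sum_le_sum hJensen
  have hsumα0 : 0 ≤ ∑ j ∈ U, α j :=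
    Finset.sum_nonneg fun j hj => (hαpos j hj).le
  -- norm bound on A
  have hAnorm : ‖A‖ ≤ M * ∑ j ∈ U, α j := by
    have : A = ∑ j ∈ U, α j • (Hbar - H j) := by
      rw [hA, Finset.sum_smul]
      rw [← Finset.sum_sub_distrib]
      congr 1; ext j; rw [smul_sub]
    rw [this]
    calc ‖∑ j ∈ U, α j • (Hbar - H j)‖ ≤ ∑ j ∈ U, ‖α j • (Hbar - H j)‖ :=
          norm_sum_le _ _
      _ ≤ ∑ j ∈ U, α j * M := by
          apply Finset.sum_le_sum
          intro j hj
          rw [norm_smul, Real.norm_eq_abs, abs_of_pos (hαpos j hj)]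
          apply mul_le_mul_of_nonneg_left _ (hαpos j hj).le
          rw [← norm_neg, neg_sub]
          exact hM ▸ Finset.le_sup' (fun j => ‖H j - Hbar‖) hj
      _ = M * ∑ j ∈ U, α j := by rw [← Finset.sum_mul, mul_comm]
  -- transpose preserves the operator norm (real case)
  have hAT : ‖Aᵀ‖ = ‖A‖ := by
    rw [← Matrix.conjTranspose_eq_transpose_of_trivial]
    exact Matrix.l2_opNorm_conjTranspose A
  -- operator norm bound on the applied vector
  have hvec : ‖Matrix.toEuclideanLin Aᵀ q‖ ≤ ‖Aᵀ‖ * ‖q‖ :=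
    ((Matrix.toEuclideanLin (𝕜 := ℝ) (m := Fin d) (n := Fin d)).trans
      LinearMap.toContinuousLinearMap Aᵀ).le_opNorm q
  -- put it together
  have hdiff : D⁻¹ • (N + Matrix.toEuclideanLin Aᵀ q) - D⁻¹ • N
      = D⁻¹ • (Matrix.toEuclideanLin Aᵀ q) := by
    rw [smul_add]; abel
  rw [hdiff, norm_smul, Real.norm_eq_abs, abs_of_pos (by positivity)]
  have hτ0 : 0 ≤ τ := by
    rw [hτ]
    exact Finset.sum_nonneg fun j _ => Finset.sum_nonneg fun n _ => (Real.exp_pos _).le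
  calc D⁻¹ * ‖Matrix.toEuclideanLin Aᵀ q‖
      ≤ D⁻¹ * (‖Aᵀ‖ * ‖q‖) := by
        apply mul_le_mul_of_nonneg_left hvec (by positivity)
    _ ≤ D⁻¹ * ((M * (τ / B)) * Cq) := by
        apply mul_le_mul_of_nonneg_left _ (by positivity)
        apply mul_le_mul _ hq (norm_nonneg _) (by positivity)
        rw [hAT]
        exact hAnorm.trans (mul_le_mul_of_nonneg_left hsumα hM0)
    _ = Cq * M * (τ / D) / B := by field_simp
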